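/- Let X = ℤ/4ℤ with u ▷ v = u + 2v. The image of ∂₂ : C₂^R(X) → C₁^R(X) is the rank-2 free abelian group generated by (1)−(3) and (2)−(4); consequently H₁^R(X) = C₁^R(X)/Im(∂₂) is free abelian of rank 2. -/

import Mathlib

open FreeAbelianGroup

/-- The boundary ∂₂ : C₂^R(X) → C₁^R(X) for the rack X = ℤ/4ℤ with
u ▷ v = u + 2v: on a generator (i,j) it is (i) − (i ▷ j) = (i) − (i + 2j). -/
noncomputable def bdry2 :
    FreeAbelianGroup (ZMod 4 × ZMod 4) →+ FreeAbelianGroup (ZMod 4) :=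
  FreeAbelianGroup.lift fun p : ZMod 4 × ZMod 4 => of p.1 - of (p.1 + 2 * p.2)

abbrev P2 := Fin 2 → ℤ
abbrev M4 := FreeAbelianGroup (ZMod 4)

def gmap : ZMod 4 → P2 × P2 := fun i =>
  if i = 1 then (![0,1], 0)
  else if i = 2 then (![1,0], ![1,0])
  else if i = 3 then (![0,1], ![0,-1])
  else (![1,0], 0)

lemma gmap0 : gmap 0 = (![1,0], 0) := by decide
lemma gmap1 : gmap 1 = (![0,1], 0) := by decide
lemma gmap2 : gmap 2 = (![1,0], ![1,0]) := by decide
lemma gmap3 : gmap 3 = (![0,1], ![0,-1]) := by decide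

lemma zmod4_cases (i : ZMod 4) : i = 0 ∨ i = 1 ∨ i = 2 ∨ i = 3 := by revert i; decide

noncomputable def Phi : M4 →+ P2 × P2 := FreeAbelianGroup.lift gmap

lemma Phi0 : Phi (of (0 : ZMod 4)) = (![1,0], 0) := by rw [Phi, lift_apply_of, gmap0]
lemma Phi1 : Phi (of (1 : ZMod 4)) = (![0,1], 0) := by rw [Phi, lift_apply_of, gmap1]
lemma Phi2 : Phi (of (2 : ZMod 4)) = (![1,0], ![1,0]) := by rw [Phi, lift_apply_of, gmap2]
lemma Phi3 : Phi (of (3 : ZMod 4)) = (![0,1], ![0,-1]) := by rw [Phi, lift_apply_of, gmap3]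

noncomputable def Psi : P2 × P2 →+ M4 where
  toFun x := x.1 0 • of (0 : ZMod 4) + x.1 1 • of (1 : ZMod 4)
    + x.2 0 • (of (2 : ZMod 4) - of 0) + x.2 1 • (of (1 : ZMod 4) - of 3)
  map_zero' := by simp
  map_add' x y := by
    simp only [Prod.fst_add, Prod.snd_add, Pi.add_apply, add_smul]
    abel

lemma Psi_apply (a b : P2) : Psi (a, b) = a 0 • of (0 : ZMod 4) + a 1 • of (1 : ZMod 4)
    + b 0 • (of (2 : ZMod 4) - of 0) + b 1 • (of (1 : ZMod 4) - of 3) := rfl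

lemma Psi_Phi (x : M4) : Psi (Phi x) = x := by
  have h : Psi.comp Phi = AddMonoidHom.id M4 := by
    ext i
    rcases zmod4_cases i with h | h | h | h <;> subst h <;>
      simp [Phi0, Phi1, Phi2, Phi3, Psi_apply]
  exact DFunLike.congr_fun h x

lemma Phi_Psi (x : P2 × P2) : Phi (Psi x) = x := by
  obtain ⟨a, b⟩ := x
  rw [Psi_apply]
  simp only [map_add, map_sub, map_zsmul, Phi0, Phi1, Phi2, Phi3]
  refine Prod.ext ?_ ?_ <;> funext i <;> fin_cases i <;> simp

noncomputable def eEquiv : M4 ≃+ P2 × P2 :=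
  { Phi with invFun := Psi, left_inv := Psi_Phi, right_inv := Phi_Psi }

lemma eEquiv_apply (x : M4) : eEquiv x = Phi x := rfl
lemma eEquiv_symm_apply (x : P2 × P2) : eEquiv.symm x = Psi x := rfl

noncomputable abbrev Hsub : AddSubgroup M4 :=
  AddSubgroup.closure { of (1 : ZMod 4) - of 3, of (2 : ZMod 4) - of 0 }

lemma gen1_mem : of (1 : ZMod 4) - of 3 ∈ Hsub := AddSubgroup.subset_closure (Or.inl rfl)
lemma gen2_mem : of (2 : ZMod 4) - of 0 ∈ Hsub := AddSubgroup.subset_closure (Or.inr rfl)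

lemma mem_H_iff (x : M4) : x ∈ Hsub ↔ (eEquiv x).1 = 0 := by
  constructor
  · intro hx
    induction hx using AddSubgroup.closure_induction with
    | mem y hy =>
      rcases hy with h | h <;> subst h <;>
        simp [eEquiv_apply, map_sub, Phi0, Phi1, Phi2, Phi3, Prod.fst_sub]
    | zero => simp
    | add y z _ _ hy hz => simp [Prod.fst_add, hy, hz]
    | neg y _ hy => simp [Prod.fst_neg, hy]
  · intro hx
    have h1 : Psi (eEquiv x) = x := Psi_Phi x
    have hx2 : x = Psi (0, (eEquiv x).2) := by
      conv_lhs => rw [← h1]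
      congr 1
      exact (Prod.ext hx rfl)
    rw [hx2, Psi_apply]
    simp only [Pi.zero_apply, zero_smul, zero_add]
    exact add_mem (AddSubgroup.zsmul_mem _ gen2_mem _) (AddSubgroup.zsmul_mem _ gen1_mem _)

lemma step_mem (i : ZMod 4) : of i - of (i + 2) ∈ Hsub := by
  rcases zmod4_cases i with h | h | h | h <;> subst h
  · rw [show ((0:ZMod 4) + 2) = 2 from by decide]
    simpa [neg_sub] using neg_mem gen2_mem
  · rw [show ((1:ZMod 4) + 2) = 3 from by decide]; exact gen1_mem
  · rw [show ((2:ZMod 4) + 2) = 0 from by decide]; exact gen2_mem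
  · rw [show ((3:ZMod 4) + 2) = 1 from by decide]
    simpa [neg_sub] using neg_mem gen1_mem

lemma range_eq : bdry2.range = Hsub := by
  apply le_antisymm
  · rintro x ⟨y, rfl⟩
    have key : ∀ p : ZMod 4 × ZMod 4, bdry2 (of p) ∈ Hsub := by
      rintro ⟨i, j⟩
      rw [show bdry2 (of (i, j)) = of i - of (i + 2 * j) from lift_apply_of ..]
      rcases (by revert j; decide : 2 * j = 0 ∨ 2 * j = 2) with h | h <;> rw [h]
      · simpa using zero_mem Hsub
      · exact step_mem i
    induction y using FreeAbelianGroup.induction_on with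
    | zero => rw [map_zero]; exact zero_mem _
    | of p => exact key p
    | neg p _ => rw [map_neg]; exact neg_mem (key p)
    | add y z hy hz => rw [map_add]; exact add_mem hy hz
  · rw [AddSubgroup.closure_le]
    rintro x (h | h) <;> subst h
    · exact ⟨of ((1 : ZMod 4), 1),
        by rw [show bdry2 (of ((1:ZMod 4),1)) = of (1:ZMod 4) - of (1 + 2*1) from lift_apply_of ..,
          show (1 + 2*1 : ZMod 4) = 3 from by decide]⟩
    · exact ⟨of ((2 : ZMod 4), 1),
        by rw [show bdry2 (of ((2:ZMod 4),1)) = of (2:ZMod 4) - of (2 + 2*1) from lift_apply_of ..,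
          show (2 + 2*1 : ZMod 4) = 0 from by decide]⟩

noncomputable def rhom : Hsub →+ P2 :=
  ((AddMonoidHom.snd P2 P2).comp eEquiv.toAddMonoidHom).domRestrict Hsub

lemma rhom_bij : Function.Bijective rhom := by
  constructor
  · intro x y hxy
    have hx := (mem_H_iff x).mp x.2
    have hy := (mem_H_iff y).mp y.2
    have h2 : (eEquiv (x:M4)).2 = (eEquiv (y:M4)).2 := hxy
    have : eEquiv (x:M4) = eEquiv (y:M4) := Prod.ext (hx.trans hy.symm) h2
    exact Subtype.ext (eEquiv.injective this)
  · intro b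
    have hmem : eEquiv.symm (0, b) ∈ Hsub := by
      rw [mem_H_iff, AddEquiv.apply_symm_apply]
    refine ⟨⟨eEquiv.symm (0, b), hmem⟩, ?_⟩
    show (eEquiv (eEquiv.symm (0, b))).2 = b
    rw [AddEquiv.apply_symm_apply]

noncomputable def qhom : M4 →+ P2 :=
  (AddMonoidHom.fst P2 P2).comp eEquiv.toAddMonoidHom

lemma qhom_surj : Function.Surjective qhom := by
  intro a
  refine ⟨eEquiv.symm (a, 0), ?_⟩
  show (eEquiv (eEquiv.symm (a, 0))).1 = a
  rw [AddEquiv.apply_symm_apply]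

lemma ker_qhom : qhom.ker = Hsub := by
  ext x
  rw [AddMonoidHom.mem_ker, mem_H_iff]
  rfl

/-- The image of ∂₂ is the rank-2 free abelian group generated by (1)−(3) and
(2)−(4) (with 4 ≡ 0); hence H₁^R(X) = C₁^R(X)/Im ∂₂ is free abelian of rank 2. -/
theorem zmod4_im_bdry2 :
    bdry2.range = AddSubgroup.closure
        { of (1 : ZMod 4) - of 3, of (2 : ZMod 4) - of 0 } ∧
    Nonempty (bdry2.range ≃+ (Fin 2 → ℤ)) ∧
    Nonempty ((FreeAbelianGroup (ZMod 4) ⧸ bdry2.range) ≃+ (Fin 2 → ℤ)) := by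
  refine ⟨range_eq, ?_, ?_⟩
  · rw [range_eq]
    exact ⟨AddEquiv.ofBijective rhom rhom_bij⟩
  · rw [range_eq, ← ker_qhom]
    exact ⟨QuotientAddGroup.quotientKerEquivOfSurjective qhom qhom_surj⟩
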